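/- The Gaussian log-max conformal set equals the minimum-distance (PCP) conformal set: let d ≥ 1, M ≥ 1, σ > 0, α ∈ (0,1). For i = 1, …, N let Y_i ∈ ℝ^d and Ŷ_i^1, …, Ŷ_i^M ∈ ℝ^d, and let Ŷ_*^1, …, Ŷ_*^M ∈ ℝ^d be a test ensemble. Define minimum-distance scores s_i := min_{1≤m≤M} ‖Y_i − Ŷ_i^m‖ and Gaussian log-max scores t_i := −log( max_{1≤m≤M} (1/M) N(Y_i; Ŷ_i^m, σ²I) ). Then { y ∈ ℝ^d : −log( max_{1≤m≤M} (1/M) N(y; Ŷ_*^m, σ²I) ) ≤ Q_{1−α}(t_1, …, t_N, +∞) } = { y ∈ ℝ^d : min_{1≤m≤M} ‖y − Ŷ_*^m‖ ≤ Q_{1−α}(s_1, …, s_N, +∞) }. -/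

import Mathlib

open MeasureTheory

/-- Empirical `β`-quantile of extended-real values `z 1, …, z m`:
`inf { x ∈ ℝ : (1/m) · #{ i : z i ≤ x } ≥ β }`, with `inf ∅ = +∞` (in `EReal`). -/
noncomputable def empQuantile {m : ℕ} (z : Fin m → EReal) (β : ℝ) : EReal :=
  sInf ((fun r : ℝ => (r : EReal)) ''
    {r : ℝ | β ≤ ((Finset.univ.filter (fun i => z i ≤ (r : EReal))).card : ℝ) / m})

/-- The empirical `β`-quantile of the `n + 1` values `z 1, …, z n, +∞`. -/
noncomputable def augQuantile {n : ℕ} (z : Fin n → ℝ) (β : ℝ) : EReal :=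
  empQuantile (Fin.snoc (fun i => ((z i : ℝ) : EReal)) ⊤) β

/-- The isotropic Gaussian density `N(y; μ, σ²I)` on `ℝ^d`. -/
noncomputable def gaussDensity (d : ℕ) (σ : ℝ) (μ y : EuclideanSpace ℝ (Fin d)) : ℝ :=
  (2 * Real.pi * σ ^ 2) ^ (-(d : ℝ) / 2) * Real.exp (-‖y - μ‖ ^ 2 / (2 * σ ^ 2))

lemma augQuantile_le_iff {n : ℕ} (z : Fin n → ℝ) (β x : ℝ) :
    ((x : EReal) ≤ augQuantile z β) ↔
      ∀ r : ℝ, β ≤ ((Finset.univ.filter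
          (fun j => (Fin.snoc (fun i => ((z i : ℝ) : EReal)) ⊤ : Fin (n+1) → EReal) j
            ≤ (r : EReal))).card : ℝ) / ((n+1 : ℕ) : ℝ) → x ≤ r := by
  rw [augQuantile, empQuantile, le_sInf_iff]
  constructor
  · intro h r hr
    have := h (r : EReal) ⟨r, hr, rfl⟩
    exact EReal.coe_le_coe_iff.mp this
  · rintro h _ ⟨r, hr, rfl⟩
    exact EReal.coe_le_coe_iff.mpr (h r hr)

lemma count_pos_exists {n : ℕ} (w : Fin n → ℝ) (β r : ℝ) (hβ : 0 < β)
    (h : β ≤ ((Finset.univ.filter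
        (fun j => (Fin.snoc (fun i => ((w i : ℝ) : EReal)) ⊤ : Fin (n+1) → EReal) j
          ≤ (r : EReal))).card : ℝ) / ((n+1 : ℕ) : ℝ)) :
    ∃ i, w i ≤ r := by
  have hcard : (Finset.univ.filter
      (fun j => (Fin.snoc (fun i => ((w i : ℝ) : EReal)) ⊤ : Fin (n+1) → EReal) j
        ≤ (r : EReal))).card ≠ 0 := by
    intro hc
    rw [hc] at h
    norm_num at h
    linarith
  obtain ⟨j, hj⟩ := Finset.card_pos.mp (Nat.pos_of_ne_zero hcard)
  rw [Finset.mem_filter] at hj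
  rcases Fin.eq_castSucc_or_eq_last j with ⟨i, rfl⟩ | rfl
  · rw [Fin.snoc_castSucc] at hj
    exact ⟨i, by exact_mod_cast hj.2⟩
  · rw [Fin.snoc_last] at hj
    exact absurd hj.2 (EReal.coe_lt_top r).not_ge

lemma count_congr {n : ℕ} (w w' : Fin n → ℝ) (r r' : ℝ)
    (h : ∀ i, w i ≤ r ↔ w' i ≤ r') :
    (Finset.univ.filter
        (fun j => (Fin.snoc (fun i => ((w i : ℝ) : EReal)) ⊤ : Fin (n+1) → EReal) j
          ≤ (r : EReal))).card =
    (Finset.univ.filter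
        (fun j => (Fin.snoc (fun i => ((w' i : ℝ) : EReal)) ⊤ : Fin (n+1) → EReal) j
          ≤ (r' : EReal))).card := by
  congr 1
  apply Finset.filter_congr
  intro j _
  rcases Fin.eq_castSucc_or_eq_last j with ⟨i, rfl⟩ | rfl
  · simp only [Fin.snoc_castSucc, EReal.coe_le_coe_iff]
    exact iff_iff_eq.mp (h i) ▸ Iff.rfl
  · simp [Fin.snoc_last]

lemma quant_key {n : ℕ} (β : ℝ) (hβ : 0 < β) (s : Fin n → ℝ) (hs : ∀ i, 0 ≤ s i)
    (φ ψ : ℝ → ℝ)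
    (hφ : ∀ a b, 0 ≤ a → 0 ≤ b → (φ a ≤ φ b ↔ a ≤ b))
    (hψ0 : ∀ r, 0 ≤ ψ r)
    (hψ : ∀ r, (∃ i, φ (s i) ≤ r) → φ (ψ r) = r)
    (x : ℝ) (hx : 0 ≤ x) :
    ((((φ x : ℝ)) : EReal) ≤ augQuantile (fun i => φ (s i)) β ↔
      ((x : ℝ) : EReal) ≤ augQuantile s β) := by
  rw [augQuantile_le_iff, augQuantile_le_iff]
  constructor
  · intro h r hr
    obtain ⟨i, hi⟩ := count_pos_exists s β r hβ hr
    have hr0 : 0 ≤ r := (hs i).trans hi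
    have hcount := count_congr (fun i => φ (s i)) s (φ r) r
      (fun i => hφ (s i) r (hs i) hr0)
    have := h (φ r) (by rw [hcount]; exact hr)
    exact (hφ x r hx hr0).mp this
  · intro h r hr
    obtain ⟨i, hi⟩ := count_pos_exists (fun i => φ (s i)) β r hβ hr
    have hrψ : φ (ψ r) = r := hψ r ⟨i, hi⟩
    have hcount := count_congr (fun i => φ (s i)) s r (ψ r)
      (fun i => by
        have h2 := hφ (s i) (ψ r) (hs i) (hψ0 r)
        rw [hrψ] at h2; exact h2)
    have := h (ψ r) (by rw [← hcount]; exact hr)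
    calc φ x ≤ φ (ψ r) := (hφ x (ψ r) hx (hψ0 r)).mpr this
    _ = r := hrψ

lemma gauss_comp (d M : ℕ) (hM : 1 ≤ M) (σ : ℝ) (hσ : 0 < σ)
    (μ : Fin M → EuclideanSpace ℝ (Fin d)) (y : EuclideanSpace ℝ (Fin d)) :
    -Real.log (⨆ m, (1 / (M : ℝ)) * gaussDensity d σ (μ m) y) =
      -Real.log ((1 / (M : ℝ)) * (2 * Real.pi * σ ^ 2) ^ (-(d : ℝ) / 2)) +
        (⨅ m, ‖y - μ m‖) ^ 2 / (2 * σ ^ 2) := by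
  haveI : Nonempty (Fin M) := Fin.pos_iff_nonempty.mp hM
  obtain ⟨m₀, hm₀⟩ := Finite.exists_min (fun m => ‖y - μ m‖)
  have hinf : (⨅ m, ‖y - μ m‖) = ‖y - μ m₀‖ :=
    le_antisymm (ciInf_le (Set.Finite.bddBelow (Set.finite_range _)) m₀) (le_ciInf hm₀)
  have h2σ : (0 : ℝ) < 2 * σ ^ 2 := by positivity
  have hsup : (⨆ m, (1 / (M : ℝ)) * gaussDensity d σ (μ m) y)
      = (1 / (M : ℝ)) * gaussDensity d σ (μ m₀) y := by
    refine le_antisymm (ciSup_le fun m => ?_)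
      (le_ciSup (Set.Finite.bddAbove (Set.finite_range
        (fun m => (1 / (M : ℝ)) * gaussDensity d σ (μ m) y))) m₀)
    have hM0 : (0 : ℝ) ≤ 1 / (M : ℝ) := by positivity
    refine mul_le_mul_of_nonneg_left ?_ hM0
    simp only [gaussDensity]
    have hpow : ‖y - μ m₀‖ ^ 2 ≤ ‖y - μ m‖ ^ 2 :=
      pow_le_pow_left₀ (norm_nonneg _) (hm₀ m) 2
    gcongr
  rw [hsup, hinf]
  have hMne : (1 / (M : ℝ)) * (2 * Real.pi * σ ^ 2) ^ (-(d : ℝ) / 2) ≠ 0 := by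
    have : (0:ℝ) < (M : ℝ) := by exact_mod_cast hM
    positivity
  rw [gaussDensity, ← mul_assoc, Real.log_mul hMne (Real.exp_ne_zero _), Real.log_exp]
  ring

/-- The Gaussian log-max conformal set equals the minimum-distance (PCP) conformal
set: calibrating the negative log-max Gaussian-kernel score at level `1 - α` yields
exactly the same prediction set as calibrating the minimum-distance score. -/
theorem stmt17 (d M N : ℕ) (hd : 1 ≤ d) (hM : 1 ≤ M)
    (σ : ℝ) (hσ : 0 < σ) (α : ℝ) (hα : α ∈ Set.Ioo (0 : ℝ) 1)
    (Y : Fin N → EuclideanSpace ℝ (Fin d))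
    (Yhat : Fin N → Fin M → EuclideanSpace ℝ (Fin d))
    (Ystar : Fin M → EuclideanSpace ℝ (Fin d)) :
    {y : EuclideanSpace ℝ (Fin d) |
        ((-Real.log (⨆ m, (1 / (M : ℝ)) * gaussDensity d σ (Ystar m) y) : ℝ) : EReal) ≤
          augQuantile (fun i : Fin N =>
            -Real.log (⨆ m, (1 / (M : ℝ)) * gaussDensity d σ (Yhat i m) (Y i))) (1 - α)} =
      {y : EuclideanSpace ℝ (Fin d) |
        (((⨅ m, ‖y - Ystar m‖) : ℝ) : EReal) ≤
          augQuantile (fun i : Fin N => ⨅ m, ‖Y i - Yhat i m‖) (1 - α)} := by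
  haveI : Nonempty (Fin M) := Fin.pos_iff_nonempty.mp hM
  have h2σ : (0 : ℝ) < 2 * σ ^ 2 := by positivity
  set c : ℝ := -Real.log ((1 / (M : ℝ)) * (2 * Real.pi * σ ^ 2) ^ (-(d : ℝ) / 2)) with hc
  set φ : ℝ → ℝ := fun x => c + x ^ 2 / (2 * σ ^ 2) with hφdef
  set ψ : ℝ → ℝ := fun r => Real.sqrt (2 * σ ^ 2 * (r - c)) with hψdef
  have hφ : ∀ a b : ℝ, 0 ≤ a → 0 ≤ b → (φ a ≤ φ b ↔ a ≤ b) := by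
    intro a b ha hb
    simp only [hφdef, add_le_add_iff_left, div_le_div_iff_of_pos_right h2σ]
    exact pow_le_pow_iff_left₀ ha hb two_ne_zero
  have hψ0 : ∀ r, 0 ≤ ψ r := fun r => Real.sqrt_nonneg _
  ext y
  simp only [Set.mem_setOf_eq]
  have ht : (fun i : Fin N =>
      -Real.log (⨆ m, (1 / (M : ℝ)) * gaussDensity d σ (Yhat i m) (Y i)))
      = fun i => φ (⨅ m, ‖Y i - Yhat i m‖) :=
    funext fun i => gauss_comp d M hM σ hσ (Yhat i) (Y i)
  rw [gauss_comp d M hM σ hσ Ystar y, ht]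
  have hs : ∀ i : Fin N, 0 ≤ ⨅ m, ‖Y i - Yhat i m‖ :=
    fun i => le_ciInf fun m => norm_nonneg _
  have hx : 0 ≤ ⨅ m, ‖y - Ystar m‖ := le_ciInf fun m => norm_nonneg _
  have hψ : ∀ r, (∃ i, φ (⨅ m, ‖Y i - Yhat i m‖) ≤ r) → φ (ψ r) = r := by
    intro r ⟨i, hi⟩
    have hrc : c ≤ r := by
      simp only [hφdef] at hi
      have hnn : (0:ℝ) ≤ (⨅ m, ‖Y i - Yhat i m‖) ^ 2 / (2 * σ ^ 2) :=
        div_nonneg (sq_nonneg _) h2σ.le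
      exact le_trans (le_add_of_nonneg_right hnn) hi
    have harg : (0:ℝ) ≤ 2 * σ ^ 2 * (r - c) := by nlinarith
    simp only [hφdef, hψdef, Real.sq_sqrt harg]
    field_simp
    ring
  exact quant_key (1 - α) (by linarith [hα.2]) _ hs φ ψ hφ hψ0 hψ _ hx
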